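/- Let m ≥ 2, n ≥ 1, let A be a real m×m symmetric matrix with a_{ij} ≥ 0 for i ≠ j, zero row sums, and irreducible; let ε > 0, c > 0, and let λ₁ < 0 be the largest eigenvalue of the pinned matrix Ã (ã_{11} = a_{11} − ε, ã_{ij} = a_{ij} otherwise). Let g : ℝ → ℝ satisfy (g(u) − g(v))(u − v) ≥ α(u − v)² for all u, v ∈ ℝ, with a constant α > 0, and write g(x) for componentwise application of g to x ∈ ℝⁿ. Suppose f : ℝⁿ × [0,∞) → ℝⁿ satisfies condition (11) with positive diagonal matrices P = diag(p₁,…,p_n), Δ = diag(Δ₁,…,Δ_n) and constant η > 0, and that Δ_k + αcλ₁ < 0 for every k = 1,…,n. Let s : [0,∞) → ℝⁿ satisfy s'(t) = f(s(t),t), and let x₁,…,x_m : [0,∞) → ℝⁿ satisfy the nonlinearly coupled controlled network x₁'(t) = f(x₁(t),t) + c·Σ_{j=1}^m a_{1j} g(x_j(t)) − cε(g(x₁(t)) − g(s(t))) and x_i'(t) = f(x_i(t),t) + c·Σ_{j=1}^m a_{ij} g(x_j(t)) for i = 2,…,m. Then for all t ≥ 0, Σ_{i=1}^m (x_i(t)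 − s(t))ᵀ P (x_i(t) − s(t)) ≤ e^{−(2η/max_k p_k)·t} · Σ_{i=1}^m (x_i(0) − s(0))ᵀ P (x_i(0) − s(0)); in particular every x_i converges to s exponentially. -/

import Mathlib

open Matrix BigOperators

lemma aux_sum_identity {m : ℕ} (A : Matrix (Fin m) (Fin m) ℝ) (hsym : A.IsSymm)
    (hrow : ∀ i, ∑ j, A i j = 0) (e z : Fin m → ℝ) :
    ∑ i, ∑ j, e i * A i j * z j
      = -(1/2) * ∑ i, ∑ j, A i j * ((e i - e j) * (z i - z j)) := by
  have hs : ∀ i j, A j i = A i j := fun i j => hsym.apply i j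
  have hcol : ∀ j, ∑ i, A i j = 0 := by
    intro j
    calc ∑ i, A i j = ∑ i, A j i := Finset.sum_congr rfl fun i _ => hs j i
    _ = 0 := hrow j
  have T1 : ∑ i : Fin m, ∑ j : Fin m, A i j * (e i * z i) = 0 := by
    refine Finset.sum_eq_zero fun i _ => ?_
    rw [← Finset.sum_mul, hrow, zero_mul]
  have T4 : ∑ i : Fin m, ∑ j : Fin m, A i j * (e j * z j) = 0 := by
    rw [Finset.sum_comm]
    refine Finset.sum_eq_zero fun j _ => ?_
    rw [← Finset.sum_mul, hcol, zero_mul]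
  have T3 : ∑ i : Fin m, ∑ j : Fin m, A i j * (e j * z i)
      = ∑ i : Fin m, ∑ j : Fin m, e i * A i j * z j := by
    rw [Finset.sum_comm]
    refine Finset.sum_congr rfl fun j _ => Finset.sum_congr rfl fun i _ => ?_
    rw [hs i j]; ring
  have expand : ∑ i : Fin m, ∑ j : Fin m, A i j * ((e i - e j) * (z i - z j))
      = ∑ i : Fin m, ∑ j : Fin m, (A i j * (e i * z i) - e i * A i j * z j
          - A i j * (e j * z i) + A i j * (e j * z j)) := by
    refine Finset.sum_congr rfl fun i _ => Finset.sum_congr rfl fun j _ => ?_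
    ring
  rw [expand] at *
  simp only [Finset.sum_add_distrib, Finset.sum_sub_distrib] at *
  linarith [T1, T4, T3]

lemma aux_quad_le {m : ℕ} (M : Matrix (Fin m) (Fin m) ℝ) (hM : M.IsHermitian) (lam : ℝ)
    (hmax : ∀ μ : ℝ, Module.End.HasEigenvalue M.mulVecLin μ → μ ≤ lam)
    (e : Fin m → ℝ) : e ⬝ᵥ M *ᵥ e ≤ lam * (e ⬝ᵥ e) := by
  set B : Matrix (Fin m) (Fin m) ℝ := lam • 1 - M with hBdef
  have hB : B.IsHermitian := by
    simp only [hBdef, Matrix.IsHermitian, Matrix.conjTranspose_sub, Matrix.conjTranspose_smul,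
      Matrix.conjTranspose_one, hM.eq, star_trivial]
  have heig : ∀ i, 0 ≤ hB.eigenvalues i := by
    intro i
    set μ := hB.eigenvalues i
    have hv := hB.mulVec_eigenvectorBasis i
    set v : Fin m → ℝ := ⇑(hB.eigenvectorBasis i) with hvdef
    have hvne : v ≠ 0 := by
      intro h0
      have := hB.eigenvectorBasis.orthonormal.ne_zero i
      exact this (by ext k; exact congrFun h0 k)
    have hMv : M.mulVecLin v = (lam - μ) • v := by
      have : B *ᵥ v = μ • v := hv
      rw [hBdef, Matrix.sub_mulVec] at this
      have h1 : (lam • (1 : Matrix (Fin m) (Fin m) ℝ)) *ᵥ v = lam • v := by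
        simp [Matrix.smul_mulVec]
      rw [h1] at this
      rw [Matrix.mulVecLin_apply, sub_smul, ← this]
      abel
    have : Module.End.HasEigenvalue M.mulVecLin (lam - μ) := by
      apply Module.End.hasEigenvalue_of_hasEigenvector (x := v)
      exact ⟨Module.End.mem_eigenspace_iff.2 hMv, hvne⟩
    have := hmax _ this
    linarith
  have hpsd : B.PosSemidef := (Matrix.IsHermitian.posSemidef_iff_eigenvalues_nonneg hB).mpr heig
  have h0 : 0 ≤ e ⬝ᵥ B *ᵥ e := by
    have := hpsd.dotProduct_mulVec_nonneg e
    simpa using this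
  have : e ⬝ᵥ B *ᵥ e = lam * (e ⬝ᵥ e) - e ⬝ᵥ M *ᵥ e := by
    rw [hBdef, Matrix.sub_mulVec, dotProduct_sub]
    congr 1
    rw [Matrix.smul_mulVec, Matrix.one_mulVec, dotProduct_smul]
    simp [smul_eq_mul]
  linarith

set_option maxHeartbeats 1000000 in
/-- Theorem 4: global exponential pinning of a nonlinearly coupled network with an
irreducible symmetric coupling matrix via a single controller. -/
theorem stmt_7 (m n : ℕ) (hm : 2 ≤ m) (hn : 1 ≤ n)
    (A : Matrix (Fin m) (Fin m) ℝ) (hsym : A.IsSymm)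
    (hoff : ∀ i j : Fin m, i ≠ j → 0 ≤ A i j)
    (hrow : ∀ i : Fin m, ∑ j, A i j = 0)
    (hirr : ∀ i j : Fin m, i ≠ j → Relation.TransGen (fun p q => A p q ≠ 0) i j)
    (ε c : ℝ) (hε : 0 < ε) (hc : 0 < c)
    (Atil : Matrix (Fin m) (Fin m) ℝ)
    (hAtil : ∀ i j : Fin m, Atil i j =
      if i = (⟨0, by omega⟩ : Fin m) ∧ j = (⟨0, by omega⟩ : Fin m) then A i j - ε else A i j)
    (lam1 : ℝ) (hlam1 : lam1 < 0)
    (hlam1eig : Module.End.HasEigenvalue (Matrix.mulVecLin Atil) lam1)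
    (hlam1max : ∀ μ : ℝ, Module.End.HasEigenvalue (Matrix.mulVecLin Atil) μ → μ ≤ lam1)
    (g : ℝ → ℝ) (α : ℝ) (hα : 0 < α)
    (hg : ∀ u v : ℝ, α * (u - v) ^ 2 ≤ (g u - g v) * (u - v))
    (p Δ : Fin n → ℝ) (hp : ∀ k, 0 < p k) (hΔ : ∀ k, 0 < Δ k)
    (η : ℝ) (hη : 0 < η)
    (f : (Fin n → ℝ) → ℝ → (Fin n → ℝ))
    (hcond : ∀ t : ℝ, 0 ≤ t → ∀ x y : Fin n → ℝ,
      (x - y) ⬝ᵥ (fun k => p k * (f x t k - Δ k * x k - f y t k + Δ k * y k))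
        ≤ -η * ((x - y) ⬝ᵥ (x - y)))
    (hΔc : ∀ k : Fin n, Δ k + α * c * lam1 < 0)
    (s : ℝ → Fin n → ℝ) (hs : ∀ t : ℝ, 0 ≤ t → HasDerivAt s (f (s t) t) t)
    (x : Fin m → ℝ → Fin n → ℝ)
    (hx1 : ∀ t : ℝ, 0 ≤ t → HasDerivAt (x ⟨0, by omega⟩)
      (f (x ⟨0, by omega⟩ t) t + c • (∑ j, A ⟨0, by omega⟩ j • (fun k => g (x j t k)))
        - (c * ε) • ((fun k => g (x ⟨0, by omega⟩ t k)) - (fun k => g (s t k)))) t)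
    (hxi : ∀ i : Fin m, i ≠ (⟨0, by omega⟩ : Fin m) → ∀ t : ℝ, 0 ≤ t →
      HasDerivAt (x i) (f (x i t) t + c • (∑ j, A i j • (fun k => g (x j t k)))) t)
    (pmax : ℝ) (hpmax : IsGreatest (Set.range p) pmax)
    (t : ℝ) (ht : 0 ≤ t) :
    ∑ i : Fin m, (x i t - s t) ⬝ᵥ (fun k => p k * (x i t - s t) k)
      ≤ Real.exp (-(2 * η / pmax) * t) *
        ∑ i : Fin m, (x i 0 - s 0) ⬝ᵥ (fun k => p k * (x i 0 - s 0) k) := by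
  have hm0 : 0 < m := by omega
  set i0 : Fin m := ⟨0, hm0⟩ with hi0def
  -- positivity of pmax
  have hpmaxpos : 0 < pmax := by
    obtain ⟨k0, hk0⟩ := hpmax.1
    exact hk0 ▸ hp k0
  have hple : ∀ k, p k ≤ pmax := fun k => hpmax.2 ⟨k, rfl⟩
  set K : ℝ := 2 * η / pmax with hKdef
  have hK : 0 < K := by positivity
  -- symmetry of Atil
  have hAtil' : ∀ i j, Atil i j = A i j - (if i = i0 ∧ j = i0 then ε else 0) := by
    intro i j; rw [hAtil i j]; split <;> simp_all
  have hAtilH : Atil.IsHermitian := by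
    ext i j
    simp only [Matrix.conjTranspose_apply, star_trivial]
    rw [hAtil' i j, hAtil' j i, hsym.apply i j]
    by_cases h1 : i = i0 <;> by_cases h2 : j = i0 <;> simp [h1, h2]
  -- the energy function and its derivative
  set E : ℝ → ℝ := fun τ => ∑ i : Fin m, ∑ k : Fin n, p k * (x i τ k - s τ k) ^ 2 with hEdef
  set D : Fin m → ℝ → Fin n → ℝ := fun i τ =>
    if i = i0 then
      f (x i0 τ) τ + c • (∑ j, A i0 j • (fun k => g (x j τ k)))
        - (c * ε) • ((fun k => g (x i0 τ k)) - (fun k => g (s τ k)))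
    else f (x i τ) τ + c • (∑ j, A i j • (fun k => g (x j τ k))) with hDdef
  have hD : ∀ i (τ : ℝ), 0 ≤ τ → HasDerivAt (x i) (D i τ) τ := by
    intro i τ hτ
    by_cases hi : i = i0
    · subst hi
      rw [hDdef]
      simp only [if_pos rfl]
      exact hx1 τ hτ
    · rw [hDdef]
      simp only [if_neg hi]
      exact hxi i hi τ hτ
  set E' : ℝ → ℝ := fun τ => ∑ i : Fin m, ∑ k : Fin n,
    p k * (2 * (x i τ k - s τ k) * (D i τ k - f (s τ) τ k)) with hE'def
  have hEd : ∀ τ : ℝ, 0 ≤ τ → HasDerivAt E (E' τ) τ := by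
    intro τ hτ
    rw [hEdef, hE'def]
    refine HasDerivAt.fun_sum fun i _ => HasDerivAt.fun_sum fun k _ => ?_
    have h1 : HasDerivAt (fun τ => x i τ k) (D i τ k) τ := hasDerivAt_pi.mp (hD i τ hτ) k
    have h2 : HasDerivAt (fun τ => s τ k) (f (s τ) τ k) τ := hasDerivAt_pi.mp (hs τ hτ) k
    have h4 := ((h1.sub h2).pow 2).const_mul (p k)
    convert h4 using 1
    · rfl
    · rfl
    simp only [Pi.sub_apply]
    push_cast
    ring
  -- key derivative bound
  have hbound : ∀ τ : ℝ, 0 ≤ τ → E' τ ≤ -K * E τ := by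
    intro τ hτ
    have hcsum : ∀ (i : Fin m) (k : Fin n),
        c * ∑ j, A i j * g (x j τ k) = ∑ j, c * A i j * g (x j τ k) := by
      intro i k
      rw [Finset.mul_sum]
      exact Finset.sum_congr rfl fun j _ => by ring
    -- componentwise form of the vector field difference
    have hDk : ∀ i (k : Fin n), D i τ k - f (s τ) τ k
        = (f (x i τ) τ k - f (s τ) τ k)
          + c * ∑ j, Atil i j * (g (x j τ k) - g (s τ k)) := by
      intro i k
      have hy : ∀ i' : Fin m, ∑ j, Atil i' j * (g (x j τ k) - g (s τ k))
          = (∑ j, A i' j * g (x j τ k))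
            - (if i' = i0 then ε * (g (x i0 τ k) - g (s τ k)) else 0) := by
        intro i'
        have hterm : ∀ j, Atil i' j * (g (x j τ k) - g (s τ k))
            = (A i' j * g (x j τ k) - A i' j * g (s τ k))
              - (if j = i0 then (if i' = i0 then ε * (g (x j τ k) - g (s τ k)) else 0) else 0) := by
          intro j
          rw [hAtil' i' j]
          by_cases h1 : i' = i0 <;> by_cases h2 : j = i0 <;> simp [h1, h2] <;> ring
        simp_rw [hterm, Finset.sum_sub_distrib, Finset.sum_ite_eq' Finset.univ i0]
        have hz : ∑ j, A i' j * g (s τ k) = 0 := by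
          rw [← Finset.sum_mul, hrow, zero_mul]
        simp only [Finset.mem_univ, if_true, hz]
        split <;> simp_all
      by_cases hi : i = i0
      · subst hi
        rw [hDdef]
        simp only [if_pos rfl, ite_true, if_true, eq_self_iff_true, Pi.sub_apply, Pi.add_apply,
          Pi.smul_apply, Finset.sum_apply, smul_eq_mul]
        have hrhs : c * ((∑ j : Fin m, A i0 j * g (x j τ k)) - ε * (g (x i0 τ k) - g (s τ k)))
            = (∑ j : Fin m, c * A i0 j * g (x j τ k)) - c * ε * g (x i0 τ k)
              + c * ε * g (s τ k) := by
          rw [mul_sub, hcsum i0]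
          ring
        rw [hy i0, if_pos rfl, hrhs, hcsum i0]
        ring
      · rw [hDdef]
        simp only [if_neg hi, Pi.add_apply, Pi.smul_apply, Finset.sum_apply, smul_eq_mul]
        rw [hy i, if_neg hi, sub_zero, hcsum i]
        ring
    -- coupling bound for each component k
    have hcoup : ∀ k : Fin n,
        ∑ i : Fin m, ∑ j : Fin m, (x i τ k - s τ k) * Atil i j * (g (x j τ k) - g (s τ k))
          ≤ α * lam1 * ∑ i : Fin m, (x i τ k - s τ k) ^ 2 := by
      intro k
      set e : Fin m → ℝ := fun i => x i τ k - s τ k with hedef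
      set y : Fin m → ℝ := fun i => g (x i τ k) - g (s τ k) with hydef
      set z : Fin m → ℝ := fun i => y i - α * e i with hzdef
      show ∑ i : Fin m, ∑ j : Fin m, e i * Atil i j * y j ≤ α * lam1 * ∑ i : Fin m, e i ^ 2
      have hsplit : ∑ i : Fin m, ∑ j : Fin m, e i * Atil i j * y j
          = α * (∑ i : Fin m, ∑ j : Fin m, e i * Atil i j * e j)
            + ∑ i : Fin m, ∑ j : Fin m, e i * Atil i j * z j := by
        rw [Finset.mul_sum, ← Finset.sum_add_distrib]
        refine Finset.sum_congr rfl fun i _ => ?_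
        rw [Finset.mul_sum, ← Finset.sum_add_distrib]
        refine Finset.sum_congr rfl fun j _ => ?_
        simp only [hzdef]
        ring
      have hzpart : ∑ i : Fin m, ∑ j : Fin m, e i * Atil i j * z j ≤ 0 := by
        have hAz : ∑ i : Fin m, ∑ j : Fin m, e i * Atil i j * z j
            = (∑ i : Fin m, ∑ j : Fin m, e i * A i j * z j) - ε * e i0 * z i0 := by
          have hterm : ∀ i j, e i * Atil i j * z j
              = e i * A i j * z j
                - (if i = i0 then (if j = i0 then ε * e i * z j else 0) else 0) := by
            intro i j
            rw [hAtil' i j]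
            by_cases h1 : i = i0 <;> by_cases h2 : j = i0 <;> simp [h1, h2] <;> ring
          simp_rw [hterm, Finset.sum_sub_distrib]
          congr 1
          rw [Finset.sum_eq_single i0]
          · simp [Finset.sum_ite_eq' Finset.univ i0]
          · intro b _ hb
            exact Finset.sum_eq_zero fun j _ => by simp [hb]
          · simp
        have hmono : ∀ a b : Fin m, 0 ≤ (e a - e b) * (z a - z b) := by
          intro a b
          have h := hg (x a τ k) (x b τ k)
          have hrw : (e a - e b) * (z a - z b)
              = (g (x a τ k) - g (x b τ k)) * (x a τ k - x b τ k)
                - α * (x a τ k - x b τ k) ^ 2 := by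
            simp only [hzdef, hydef, hedef]
            ring
          rw [hrw]
          linarith
        have h00 : 0 ≤ e i0 * z i0 := by
          have h := hg (x i0 τ k) (s τ k)
          have hrw : e i0 * z i0
              = (g (x i0 τ k) - g (s τ k)) * (x i0 τ k - s τ k)
                - α * (x i0 τ k - s τ k) ^ 2 := by
            simp only [hzdef, hydef, hedef]
            ring
          rw [hrw]
          linarith
        have hAzle : (∑ i : Fin m, ∑ j : Fin m, e i * A i j * z j) ≤ 0 := by
          rw [aux_sum_identity A hsym hrow e z]
          have hnn : 0 ≤ ∑ i : Fin m, ∑ j : Fin m, A i j * ((e i - e j) * (z i - z j)) := by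
            refine Finset.sum_nonneg fun i _ => Finset.sum_nonneg fun j _ => ?_
            by_cases hij : i = j
            · subst hij; simp
            · exact mul_nonneg (hoff i j hij) (hmono i j)
          linarith
        have hez : 0 ≤ ε * e i0 * z i0 := by
          rw [mul_assoc]
          exact mul_nonneg hε.le h00
        rw [hAz]
        linarith
      have hquad : ∑ i : Fin m, ∑ j : Fin m, e i * Atil i j * e j ≤ lam1 * ∑ i : Fin m, e i ^ 2 := by
        have h := aux_quad_le Atil hAtilH lam1 hlam1max e
        have h1 : e ⬝ᵥ Atil *ᵥ e = ∑ i : Fin m, ∑ j : Fin m, e i * Atil i j * e j := by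
          simp only [dotProduct, Matrix.mulVec, Finset.mul_sum]
          exact Finset.sum_congr rfl fun i _ => Finset.sum_congr rfl fun j _ => by ring
        have h2 : e ⬝ᵥ e = ∑ i : Fin m, e i ^ 2 := by
          simp only [dotProduct]
          exact Finset.sum_congr rfl fun i _ => by ring
        rw [h1, h2] at h
        exact h
      rw [hsplit]
      have hq := mul_le_mul_of_nonneg_left hquad hα.le
      linarith
    -- bound from condition (11)
    have hfirst : ∀ i : Fin m,
        ∑ k : Fin n, p k * ((x i τ k - s τ k) * (f (x i τ) τ k - f (s τ) τ k))
          ≤ -η * (∑ k : Fin n, (x i τ k - s τ k) ^ 2)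
            + ∑ k : Fin n, p k * Δ k * (x i τ k - s τ k) ^ 2 := by
      intro i
      have h := hcond τ hτ (x i τ) (s τ)
      simp only [dotProduct, Pi.sub_apply] at h
      have h1 : ∑ k : Fin n, (x i τ k - s τ k)
            * (p k * (f (x i τ) τ k - Δ k * x i τ k - f (s τ) τ k + Δ k * s τ k))
          = (∑ k : Fin n, p k * ((x i τ k - s τ k) * (f (x i τ) τ k - f (s τ) τ k)))
            - ∑ k : Fin n, p k * Δ k * (x i τ k - s τ k) ^ 2 := by
        rw [← Finset.sum_sub_distrib]
        exact Finset.sum_congr rfl fun k _ => by ring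
      have h2 : ∑ k : Fin n, (x i τ k - s τ k) * (x i τ k - s τ k)
          = ∑ k : Fin n, (x i τ k - s τ k) ^ 2 :=
        Finset.sum_congr rfl fun k _ => by ring
      rw [h1, h2] at h
      linarith
    -- rewrite E' τ
    have hE'eq : E' τ
        = 2 * (∑ i : Fin m, ∑ k : Fin n,
              p k * ((x i τ k - s τ k) * (f (x i τ) τ k - f (s τ) τ k)))
          + 2 * c * (∑ k : Fin n, p k * (∑ i : Fin m, ∑ j : Fin m,
              (x i τ k - s τ k) * Atil i j * (g (x j τ k) - g (s τ k)))) := by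
      have step : ∀ (i : Fin m) (k : Fin n),
          p k * (2 * (x i τ k - s τ k) * (D i τ k - f (s τ) τ k))
          = 2 * (p k * ((x i τ k - s τ k) * (f (x i τ) τ k - f (s τ) τ k)))
            + 2 * c * ∑ j : Fin m,
                p k * ((x i τ k - s τ k) * Atil i j * (g (x j τ k) - g (s τ k))) := by
        intro i k
        rw [hDk i k]
        have hps : ∑ j : Fin m, p k * ((x i τ k - s τ k) * Atil i j * (g (x j τ k) - g (s τ k)))
            = p k * (x i τ k - s τ k) * ∑ j : Fin m, Atil i j * (g (x j τ k) - g (s τ k)) := by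
          rw [Finset.mul_sum]
          exact Finset.sum_congr rfl fun j _ => by ring
        rw [hps]
        ring
      have hswap : ∑ i : Fin m, ∑ k : Fin n, p k * ∑ j : Fin m,
            (x i τ k - s τ k) * Atil i j * (g (x j τ k) - g (s τ k))
          = ∑ k : Fin n, p k * (∑ i : Fin m, ∑ j : Fin m,
              (x i τ k - s τ k) * Atil i j * (g (x j τ k) - g (s τ k))) := by
        rw [Finset.sum_comm]
        refine Finset.sum_congr rfl fun k _ => ?_
        rw [Finset.mul_sum]
      calc E' τ = ∑ i : Fin m, ∑ k : Fin n,
            (2 * (p k * ((x i τ k - s τ k) * (f (x i τ) τ k - f (s τ) τ k)))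
              + 2 * c * ∑ j : Fin m,
                  p k * ((x i τ k - s τ k) * Atil i j * (g (x j τ k) - g (s τ k)))) := by
            rw [hE'def]
            exact Finset.sum_congr rfl fun i _ => Finset.sum_congr rfl fun k _ => step i k
        _ = _ := by
            simp only [Finset.sum_add_distrib, ← Finset.mul_sum]
            rw [hswap]
    -- value of E
    have hEτ : E τ = ∑ k : Fin n, p k * (∑ i : Fin m, (x i τ k - s τ k) ^ 2) := by
      rw [hEdef]
      simp only
      rw [Finset.sum_comm]
      exact Finset.sum_congr rfl fun k _ => by rw [Finset.mul_sum]
    -- combine everything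
    have hT1le : ∑ i : Fin m, ∑ k : Fin n,
          p k * ((x i τ k - s τ k) * (f (x i τ) τ k - f (s τ) τ k))
        ≤ -η * (∑ k : Fin n, ∑ i : Fin m, (x i τ k - s τ k) ^ 2)
          + ∑ k : Fin n, p k * Δ k * (∑ i : Fin m, (x i τ k - s τ k) ^ 2) := by
      calc ∑ i : Fin m, ∑ k : Fin n,
            p k * ((x i τ k - s τ k) * (f (x i τ) τ k - f (s τ) τ k))
          ≤ ∑ i : Fin m, (-η * (∑ k : Fin n, (x i τ k - s τ k) ^ 2)
              + ∑ k : Fin n, p k * Δ k * (x i τ k - s τ k) ^ 2) :=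
            Finset.sum_le_sum fun i _ => hfirst i
        _ = -η * (∑ k : Fin n, ∑ i : Fin m, (x i τ k - s τ k) ^ 2)
            + ∑ k : Fin n, p k * Δ k * (∑ i : Fin m, (x i τ k - s τ k) ^ 2) := by
            rw [Finset.sum_add_distrib, ← Finset.mul_sum]
            congr 1
            · rw [Finset.sum_comm]
            · rw [Finset.sum_comm]
              exact Finset.sum_congr rfl fun k _ => by rw [Finset.mul_sum]
    have hT2le : ∑ k : Fin n, p k * (∑ i : Fin m, ∑ j : Fin m,
          (x i τ k - s τ k) * Atil i j * (g (x j τ k) - g (s τ k)))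
        ≤ ∑ k : Fin n, p k * (α * lam1 * ∑ i : Fin m, (x i τ k - s τ k) ^ 2) :=
      Finset.sum_le_sum fun k _ => mul_le_mul_of_nonneg_left (hcoup k) (hp k).le
    have hone : 2 * (-η * (∑ k : Fin n, ∑ i : Fin m, (x i τ k - s τ k) ^ 2)
            + ∑ k : Fin n, p k * Δ k * (∑ i : Fin m, (x i τ k - s τ k) ^ 2))
          + 2 * c * (∑ k : Fin n, p k * (α * lam1 * ∑ i : Fin m, (x i τ k - s τ k) ^ 2))
          + K * (∑ k : Fin n, p k * (∑ i : Fin m, (x i τ k - s τ k) ^ 2))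
        = ∑ k : Fin n, (-2 * η * (∑ i : Fin m, (x i τ k - s τ k) ^ 2)
            + 2 * (p k * Δ k * (∑ i : Fin m, (x i τ k - s τ k) ^ 2))
            + 2 * c * (p k * (α * lam1 * ∑ i : Fin m, (x i τ k - s τ k) ^ 2))
            + K * (p k * (∑ i : Fin m, (x i τ k - s τ k) ^ 2))) := by
      simp only [Finset.sum_add_distrib, ← Finset.mul_sum]
      ring
    have hfinal : ∑ k : Fin n, (-2 * η * (∑ i : Fin m, (x i τ k - s τ k) ^ 2)
            + 2 * (p k * Δ k * (∑ i : Fin m, (x i τ k - s τ k) ^ 2))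
            + 2 * c * (p k * (α * lam1 * ∑ i : Fin m, (x i τ k - s τ k) ^ 2))
            + K * (p k * (∑ i : Fin m, (x i τ k - s τ k) ^ 2))) ≤ 0 := by
      refine Finset.sum_nonpos fun k _ => ?_
      set q : ℝ := ∑ i : Fin m, (x i τ k - s τ k) ^ 2 with hqdef
      have hqnn : 0 ≤ q := Finset.sum_nonneg fun i _ => sq_nonneg _
      have h1 : K * p k ≤ K * pmax := mul_le_mul_of_nonneg_left (hple k) hK.le
      have h2 : K * pmax = 2 * η := by
        rw [hKdef]
        field_simp
      have h3 := mul_le_mul_of_nonneg_right h1 hqnn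
      rw [h2] at h3
      have hB1 : p k * (Δ k + α * c * lam1) ≤ 0 :=
        mul_nonpos_of_nonneg_of_nonpos (hp k).le (hΔc k).le
      have hB : p k * (Δ k + α * c * lam1) * q ≤ 0 := by
        nlinarith [hB1, hqnn]
      nlinarith [h3, hB]
    have h2T2 := mul_le_mul_of_nonneg_left hT2le (by positivity : (0:ℝ) ≤ 2 * c)
    rw [hE'eq, hEτ]
    nlinarith [hT1le, h2T2, hone, hfinal]
  -- Gronwall argument

  have hW : ∀ τ : ℝ, 0 ≤ τ →
      HasDerivAt (fun τ => Real.exp (K * τ) * E τ)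
        (Real.exp (K * τ) * K * E τ + Real.exp (K * τ) * E' τ) τ := by
    intro τ hτ
    have h1 : HasDerivAt (fun τ : ℝ => K * τ) K τ := by
      simpa using (hasDerivAt_id τ).const_mul K
    have h2 : HasDerivAt (fun τ : ℝ => Real.exp (K * τ)) (Real.exp (K * τ) * K) τ :=
      (Real.hasDerivAt_exp (K * τ)).comp τ h1
    exact h2.mul (hEd τ hτ)
  have hanti : AntitoneOn (fun τ => Real.exp (K * τ) * E τ) (Set.Ici (0 : ℝ)) := by
    apply antitoneOn_of_deriv_nonpos (convex_Ici 0)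
    · intro τ hτ
      exact ((hW τ hτ).continuousAt).continuousWithinAt
    · intro τ hτ
      rw [interior_Ici] at hτ
      exact (hW τ (le_of_lt hτ)).differentiableAt.differentiableWithinAt
    · intro τ hτ
      rw [interior_Ici] at hτ
      rw [(hW τ hτ.le).deriv]
      have hb := hbound τ hτ.le
      have hex : (0 : ℝ) < Real.exp (K * τ) := Real.exp_pos _
      nlinarith [hex]
  have hWt : Real.exp (K * t) * E t ≤ Real.exp (K * 0) * E 0 :=
    hanti (Set.self_mem_Ici) ht ht
  have hEt : E t ≤ Real.exp (-(2 * η / pmax) * t) * E 0 := by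
    rw [mul_zero, Real.exp_zero, one_mul] at hWt
    have hex : (0 : ℝ) < Real.exp (K * t) := Real.exp_pos _
    rw [show -(2 * η / pmax) * t = -(K * t) from by rw [hKdef]; ring, Real.exp_neg]
    calc E t = (Real.exp (K * t))⁻¹ * (Real.exp (K * t) * E t) := by field_simp
      _ ≤ (Real.exp (K * t))⁻¹ * E 0 := mul_le_mul_of_nonneg_left hWt (by positivity)
  -- convert the goal
  have hgoal : ∀ τ : ℝ, ∑ i : Fin m, (x i τ - s τ) ⬝ᵥ (fun k => p k * (x i τ - s τ) k) = E τ := by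
    intro τ
    rw [hEdef]
    refine Finset.sum_congr rfl fun i _ => ?_
    simp only [dotProduct, Pi.sub_apply]
    exact Finset.sum_congr rfl fun k _ => by ring
  rw [hgoal t, hgoal 0]
  exact hEt
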